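/- The diophantine equation x⁴ + 4x²y² − 3y⁴ = z² has no solution in positive integers x, y, z. -/

import Mathlib

private lemma odd_sq_mod8 {n : ℤ} (h : Odd n) : n ^ 2 % 8 = 1 := by
  obtain ⟨k, rfl⟩ := h
  obtain ⟨m, hm⟩ := Int.even_mul_succ_self k
  have h2 : (2 * k + 1) ^ 2 = 1 + 8 * m := by linear_combination 4 * hm
  rw [h2, Int.add_mul_emod_self_left]; decide

private lemma odd_pow4_mod16 {n : ℤ} (h : Odd n) : n ^ 4 % 16 = 1 := by
  have h1 := odd_sq_mod8 h
  obtain ⟨j, hj⟩ : ∃ j, n ^ 2 = 8 * j + 1 := ⟨n ^ 2 / 8, by omega⟩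
  have h2 : n ^ 4 = 1 + 16 * (4 * j * j + j) := by
    calc n ^ 4 = (n ^ 2) ^ 2 := by ring
    _ = (8 * j + 1) ^ 2 := by rw [hj]
    _ = 1 + 16 * (4 * j * j + j) := by ring
  rw [h2, Int.add_mul_emod_self_left]; decide

private lemma odd_pow4_mod8 {n : ℤ} (h : Odd n) : n ^ 4 % 8 = 1 := by
  have := odd_pow4_mod16 h
  omega

private lemma pow4_mod8_cases (s : ℤ) : s ^ 4 % 8 = 0 ∨ s ^ 4 % 8 = 1 := by
  rcases Int.even_or_odd s with ⟨c, rfl⟩ | hs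
  · left
    have : (c + c) ^ 4 = 8 * (2 * (c * c * c * c)) := by ring
    rw [this, Int.mul_emod_right]
  · right; exact odd_pow4_mod8 hs

private lemma even_pow4_mod16 {n : ℤ} (h : Even n) : n ^ 4 % 16 = 0 := by
  obtain ⟨c, rfl⟩ := h
  have : (c + c) ^ 4 = 16 * (c * c * c * c) := by ring
  rw [this, Int.mul_emod_right]

private lemma sq_mod16 (z : ℤ) :
    z ^ 2 % 16 = 0 ∨ z ^ 2 % 16 = 1 ∨ z ^ 2 % 16 = 4 ∨ z ^ 2 % 16 = 9 := by
  obtain ⟨k, r, hr0, hr8, rfl⟩ : ∃ k r, 0 ≤ r ∧ r < 8 ∧ z = 8 * k + r :=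
    ⟨z / 8, z % 8, by omega, by omega, by omega⟩
  have h : (8 * k + r) ^ 2 = r ^ 2 + 16 * (4 * k * k + k * r) := by ring
  rw [h, Int.add_mul_emod_self_left]
  interval_cases r <;> decide

private lemma pos_factor {a b : ℤ} (ha : 0 < a) (h : 0 < a * b) : 0 < b := by
  nlinarith

private lemma pow4_inj {a b : ℤ} (ha : 0 ≤ a) (hb : 0 ≤ b) (h : a ^ 4 = b ^ 4) : a = b := by
  rcases lt_trichotomy a b with hl | he | hl
  · exact absurd h (ne_of_lt (pow_lt_pow_left₀ hl ha (by norm_num)))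
  · exact he
  · exact absurd h.symm (ne_of_lt (pow_lt_pow_left₀ hl hb (by norm_num)))

private lemma pow4_of_coprime {a b c : ℤ} (ha : 0 < a) (hb : 0 < b) (h : IsCoprime a b)
    (heq : a * b = c ^ 4) : ∃ s t : ℤ, 0 < s ∧ 0 < t ∧ a = s ^ 4 ∧ b = t ^ 4 := by
  have key : ∀ d : ℤ, 0 < d → ∀ e : ℤ, Associated (e ^ 4) d → ∃ s : ℤ, 0 < s ∧ d = s ^ 4 := by
    intro d hd e ⟨u, hu⟩
    rcases Int.units_eq_one_or u with rfl | rfl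
    · refine ⟨|e|, ?_, ?_⟩
      · have he4 : e ^ 4 = d := by simpa using hu
        have : e ≠ 0 := by rintro rfl; simp at he4; omega
        exact abs_pos.mpr this
      · have : |e| ^ 4 = |e ^ 4| := (abs_pow e 4).symm
        rw [this, abs_of_nonneg (by positivity)]
        simpa using hu.symm
    · exfalso
      have : d = -(e ^ 4) := by
        rw [← hu]; simp
      nlinarith [sq_nonneg (e^2), sq_nonneg e]
  obtain ⟨d1, hd1⟩ := exists_associated_pow_of_mul_eq_pow' h heq
  obtain ⟨s, hs, ha'⟩ := key a ha d1 hd1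
  obtain ⟨d2, hd2⟩ := exists_associated_pow_of_mul_eq_pow' h.symm (by rw [mul_comm]; exact heq)
  obtain ⟨t, ht, hb'⟩ := key b hb d2 hd2
  exact ⟨s, t, hs, ht, ha', hb'⟩


private lemma coprime_of_pow4 {s t : ℤ} (h : IsCoprime (s ^ 4) (t ^ 4)) : IsCoprime s t :=
  (IsCoprime.pow_left_iff (by norm_num)).mp ((IsCoprime.pow_right_iff (by norm_num)).mp h)

private lemma decomp {u v w cc q : ℤ} (hu : 0 < u) (hv : 0 < v) (hw : 0 < w)
    (hcop : IsCoprime u v) (hq : Prime q) (hqpos : 0 < q) (hcc : 0 < cc) (hcu : cc ∣ u)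
    (hccq : IsCoprime cc q) (hprod : u * v = cc * q * w ^ 4) :
    ∃ s t : ℤ, 0 < s ∧ 0 < t ∧ s * t = w ∧ IsCoprime s t ∧
      ((u = cc * q * s ^ 4 ∧ v = t ^ 4) ∨ (u = cc * s ^ 4 ∧ v = q * t ^ 4)) := by
  have hccq0 : (0:ℤ) < cc * q := mul_pos hcc hqpos
  have hqdvd : q ∣ u * v := by rw [hprod]; exact ⟨cc * w ^ 4, by ring⟩
  rcases (hq.2.2 u v hqdvd) with hqu | hqv
  · obtain ⟨U, hU⟩ := hccq.mul_dvd hcu hqu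
    have hUv : U * v = w ^ 4 := by
      apply mul_left_cancel₀ (ne_of_gt hccq0)
      linear_combination hprod - v * hU
    have hUpos : 0 < U := pos_factor hccq0 (by rw [← hU]; exact hu)
    have hcopUv : IsCoprime U v :=
      hcop.of_isCoprime_of_dvd_left ⟨cc * q, by rw [hU]; ring⟩
    obtain ⟨s, t, hs, ht, hU4, hv4⟩ := pow4_of_coprime hUpos hv hcopUv hUv
    have hst : s * t = w := by
      apply pow4_inj (by positivity) (le_of_lt hw)
      calc (s*t)^4 = s^4 * t^4 := by ring
      _ = U * v := by rw [hU4, hv4]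
      _ = w ^ 4 := hUv
    refine ⟨s, t, hs, ht, hst, ?_, Or.inl ⟨by rw [hU, hU4], hv4⟩⟩
    exact coprime_of_pow4 (hU4 ▸ hv4 ▸ hcopUv)
  · obtain ⟨U, hU⟩ := hcu
    obtain ⟨V, hV⟩ := hqv
    have hUV : U * V = w ^ 4 := by
      apply mul_left_cancel₀ (ne_of_gt hccq0)
      linear_combination hprod - v * hU - cc * U * hV
    have hUpos : 0 < U := pos_factor hcc (by rw [← hU]; exact hu)
    have hVpos : 0 < V := pos_factor hqpos (by rw [← hV]; exact hv)
    have hcopUV : IsCoprime U V :=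
      (hcop.of_isCoprime_of_dvd_left ⟨cc, by rw [hU]; ring⟩).of_isCoprime_of_dvd_right
        ⟨q, by rw [hV]; ring⟩
    obtain ⟨s, t, hs, ht, hU4, hV4⟩ := pow4_of_coprime hUpos hVpos hcopUV hUV
    have hst : s * t = w := by
      apply pow4_inj (by positivity) (le_of_lt hw)
      calc (s*t)^4 = s^4 * t^4 := by ring
      _ = U * V := by rw [hU4, hV4]
      _ = w ^ 4 := hUV
    refine ⟨s, t, hs, ht, hst, coprime_of_pow4 (hU4 ▸ hV4 ▸ hcopUV), Or.inr ⟨by rw [hU, hU4], by rw [hV, hV4]⟩⟩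

private lemma K1 {X S T U : ℤ} (h : X = 4*S + 7*T - 8*U) (hX : X % 8 = 1) (hT : T % 8 = 1)
    (hS : S % 8 = 0 ∨ S % 8 = 1) : False := by omega
private lemma K2 {X S T U : ℤ} (h : X = 28*S + T - 8*U) (hX : X % 8 = 1) (hT : T % 8 = 1)
    (hS : S % 8 = 1) : False := by omega
private lemma K3 {X B A C : ℤ} (h : X = 3*B - 16*A + 16*C) (hX : X % 8 = 1) (hB : B % 8 = 1) :
    False := by omega
private lemma K4 {X B A C : ℤ} (h : X = 48*A - B + 16*C) (hX : X % 8 = 1) (hB : B % 8 = 1) :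
    False := by omega
private lemma K5 {X B A C : ℤ} (h : X = 16*A - 3*B + 16*C) (hX : X % 8 = 1) (hB : B % 8 = 1) :
    False := by omega
private lemma K6 {Z A B C : ℤ} (h : Z = A + 4*B - 3*C) (hA : A % 16 = 1) (hB : B % 8 = 1)
    (hC : C % 16 = 1) (hZ : Z % 16 = 0 ∨ Z % 16 = 1 ∨ Z % 16 = 4 ∨ Z % 16 = 9) : False := by omega
private lemma K7 {Z A B C : ℤ} (h : Z = A + B - 3*C) (hA : A % 16 = 0) (hB : B % 16 = 0)
    (hC : C % 16 = 1) (hZ : Z % 16 = 0 ∨ Z % 16 = 1 ∨ Z % 16 = 4 ∨ Z % 16 = 9) : False := by omega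

private lemma odd_of_pow4_odd {t : ℤ} (h : Odd (t ^ 4)) : Odd t := by
  rcases Int.even_or_odd t with ⟨c, rfl⟩ | ho
  · exact absurd h (Int.not_odd_iff_even.mpr ⟨8*c^4, by ring⟩)
  · exact ho

private lemma coprime_pow2_of_odd {o : ℤ} (h : Odd o) (n : ℕ) : IsCoprime ((2:ℤ) ^ n) o := by
  have h2 : IsCoprime (2:ℤ) o := by
    rw [Int.prime_two.coprime_iff_not_dvd]
    rintro ⟨c, hc⟩
    exact (Int.not_odd_iff_even.mpr ⟨c, by omega⟩) h
  exact h2.pow_left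

private lemma stage1 {e o x w : ℤ} (he : 0 < e) (ho : 0 < o) (hx : Odd x) (hw : 0 < w)
    (hcop : IsCoprime e o) (hoodd : Odd o)
    (hprod : e * o = 28 * w ^ 4) (hsum : e + o = x ^ 2 + 8 * w ^ 2) :
    ∃ s t : ℤ, 0 < s ∧ 0 < t ∧ IsCoprime s t ∧ Odd t ∧ s * t = w ∧
      x ^ 2 = 28 * s ^ 4 + t ^ 4 - 8 * (s ^ 2 * t ^ 2) := by
  have hcu : (4:ℤ) ∣ e := by
    have hc : IsCoprime ((2:ℤ)^2) o := coprime_pow2_of_odd hoodd 2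
    have : (4:ℤ) ∣ e * o := by rw [hprod]; exact ⟨7 * w ^ 4, by ring⟩
    exact (by norm_num : ((2:ℤ)^2) = 4) ▸ hc.dvd_of_dvd_mul_right (by norm_num at hc ⊢; exact this)
  obtain ⟨s, t, hs, ht, hst, hstc, hcase⟩ :=
    decomp he ho hw hcop (by norm_num : Prime (7:ℤ)) (by norm_num) (by norm_num : (0:ℤ) < 4) hcu
      (by norm_num) (by linear_combination hprod)
  rcases hcase with ⟨he4, ho4⟩ | ⟨he4, ho4⟩
  · have htodd : Odd t := odd_of_pow4_odd (ho4 ▸ hoodd)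
    refine ⟨s, t, hs, ht, hstc, htodd, hst, ?_⟩
    linear_combination -hsum + he4 + ho4 + 8 * (s * t + w) * hst
  · exfalso
    have htodd : Odd t := odd_of_pow4_odd ((Int.odd_mul.mp (ho4 ▸ hoodd)).2)
    exact K1 (X := x^2) (S := s^4) (T := t^4) (U := s^2*t^2) (by linear_combination -hsum + he4 + ho4 + 8 * (s * t + w) * hst)
      (odd_sq_mod8 hx) (odd_pow4_mod8 htodd) (pow4_mod8_cases s)


private lemma lt_mul_self' {g y : ℤ} (h2 : 2 ≤ g) (hy : 0 < y) : y < g * y := by nlinarith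

private lemma lt_of_sq_sub {z A c : ℤ} (hz : 0 < z) (hA : 0 < A) (hc : 0 < c)
    (key : A ^ 2 - z ^ 2 = c) : z < A := by
  by_contra hle
  push_neg at hle
  nlinarith [mul_nonneg (sub_nonneg.mpr hle) (by linarith : (0:ℤ) ≤ z + A)]

private lemma two_a_lt {a b t : ℤ} (ha : 0 < a) (hb : 1 ≤ b) (ht : 1 ≤ t) :
    2 * a < 4 * (a * b * t) := by
  have hbt : 1 ≤ b * t := by nlinarith [mul_nonneg (sub_nonneg.mpr hb) (sub_nonneg.mpr ht)]
  nlinarith [mul_le_mul_of_nonneg_left hbt (le_of_lt ha)]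

private lemma both_pos {a b c : ℤ} (h : a * b = c) (hc : 0 < c) (hs : 0 < a + b) :
    0 < a ∧ 0 < b := by
  rcases le_or_gt a 0 with ha | ha
  · rcases le_or_gt b 0 with hb | hb
    · exfalso; linarith
    · exfalso; nlinarith
  · rcases le_or_gt b 0 with hb | hb
    · exfalso; nlinarith
    · exact ⟨ha, hb⟩

private lemma descent : ∀ (N : ℕ) (x y z : ℤ), y.natAbs = N → 0 < x → 0 < y → 0 < z →
    x ^ 4 + 4 * x ^ 2 * y ^ 2 - 3 * y ^ 4 = z ^ 2 → False := by
  intro N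
  induction N using Nat.strong_induction_on with
  | _ N ih =>
  intro x y z hN hx hy hz heq
  by_cases hcop : IsCoprime x y
  case neg =>
    have hg1 : Int.gcd x y ≠ 1 := fun h => hcop (Int.isCoprime_iff_gcd_eq_one.mpr h)
    have hg0 : Int.gcd x y ≠ 0 := by
      intro h
      exact absurd (Int.gcd_eq_zero_iff.mp h).1 (by omega)
    obtain ⟨x1, hx1⟩ : ((Int.gcd x y : ℤ)) ∣ x := Int.gcd_dvd_left _ _
    obtain ⟨y1, hy1⟩ : ((Int.gcd x y : ℤ)) ∣ y := Int.gcd_dvd_right _ _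
    set g : ℤ := (Int.gcd x y : ℤ) with hgdef
    have hgpos : (0:ℤ) < g := by
      rw [hgdef]; exact_mod_cast Nat.pos_of_ne_zero hg0
    have hg2 : (2:ℤ) ≤ g := by
      rw [hgdef]; exact_mod_cast (by omega : 2 ≤ Int.gcd x y)
    have hdz : (g^2)^2 ∣ z^2 :=
      ⟨x1^4 + 4*x1^2*y1^2 - 3*y1^4, by rw [hx1, hy1] at heq; linear_combination -heq⟩
    obtain ⟨z1, hz1⟩ : g^2 ∣ z := (Int.pow_dvd_pow_iff two_ne_zero).mp hdz
    have hx1p : 0 < x1 := pos_factor hgpos (hx1 ▸ hx)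
    have hy1p : 0 < y1 := pos_factor hgpos (hy1 ▸ hy)
    have hz1p : 0 < z1 := pos_factor (by positivity) (hz1 ▸ hz)
    have heq1 : x1^4 + 4*x1^2*y1^2 - 3*y1^4 = z1^2 := by
      apply mul_left_cancel₀ (a := g^4) (by positivity)
      rw [hx1, hy1, hz1] at heq
      linear_combination heq
    have hlt : y1.natAbs < N := by
      rw [← hN, hy1]
      exact Int.natAbs_lt_natAbs_of_nonneg_of_lt (le_of_lt hy1p) (lt_mul_self' hg2 hy1p)
    exact ih _ hlt x1 y1 z1 rfl hx1p hy1p hz1p heq1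
  case pos =>
  -- mod 16 : y must be even
  have hyeven : Even y := by
    by_contra hodd
    have hyodd : Odd y := Int.not_even_iff_odd.mp hodd
    rcases Int.even_or_odd x with hxe | hxo
    · refine K7 (Z := z^2) (A := x^4) (B := 4*(x^2*y^2)) (C := y^4)
        (by linear_combination -heq) (even_pow4_mod16 hxe) ?_ (odd_pow4_mod16 hyodd) (sq_mod16 z)
      obtain ⟨c, rfl⟩ := hxe
      have h16 : 4*((c+c)^2*y^2) = 16*(c*c*y*y) := by ring
      rw [h16, Int.mul_emod_right]
    · exact K6 (Z := z^2) (A := x^4) (B := (x*y)^2) (C := y^4)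
        (by linear_combination -heq) (odd_pow4_mod16 hxo) (odd_sq_mod8 (hxo.mul hyodd))
        (odd_pow4_mod16 hyodd) (sq_mod16 z)
  have hxodd : Odd x := by
    rcases Int.even_or_odd x with ⟨c, rfl⟩ | hxo
    · exfalso
      obtain ⟨d, hd⟩ := hyeven
      have := hcop.isUnit_of_dvd' (⟨c, by ring⟩ : (2:ℤ) ∣ c + c) (⟨d, by omega⟩ : (2:ℤ) ∣ y)
      rw [Int.isUnit_iff] at this
      omega
    · exact hxo
  obtain ⟨w, rfl⟩ := hyeven
  have hw : 0 < w := by omega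
  have hzodd : Odd z := by
    have hz2 : z^2 % 2 = 1 := by
      have hA : x^4 % 2 = 1 := by
        have := odd_pow4_mod8 hxodd; omega
      have hC : (w+w)^4 % 2 = 0 := by
        have h16 : (w+w)^4 = 2*(8*(w*w*w*w)) := by ring
        rw [h16, Int.mul_emod_right]
      have hB : (4*(x^2*(w+w)^2)) % 2 = 0 := by
        have h16 : 4*(x^2*(w+w)^2) = 2*(2*(x^2*(w+w)^2)) := by ring
        rw [h16, Int.mul_emod_right]
      have hzz : z^2 = x^4 + 4*(x^2*(w+w)^2) - 3*(w+w)^4 := by linear_combination -heq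
      omega
    rcases Int.even_or_odd z with ⟨c, rfl⟩ | h
    · exfalso
      have : (c+c)^2 = 2*(2*(c*c)) := by ring
      rw [this, Int.mul_emod_right] at hz2
      exact absurd hz2 (by norm_num)
    · exact h
  set A : ℤ := x^2 + 2*(w+w)^2 with hAdef
  have hApos : 0 < A := by positivity
  have hAodd : Odd A := (hxodd.pow).add_even ⟨(w+w)^2, by ring⟩
  have key : A^2 - z^2 = 7*(w+w)^4 := by
    linear_combination heq + (A + (x^2+2*(w+w)^2))*hAdef
  have hzA : z < A := lt_of_sq_sub hz hApos (by positivity) key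
  obtain ⟨m, hm⟩ := hAodd.sub_odd hzodd
  obtain ⟨nn, hnn⟩ := hAodd.add_odd hzodd
  have hmpos : 0 < m := by omega
  have hnnpos : 0 < nn := by omega
  have hsum1 : m + nn = A := by omega
  have hdiff1 : nn - m = z := by omega
  have hprod1 : m * nn = 28 * w^4 := by
    apply mul_left_cancel₀ (a := (4:ℤ)) (by norm_num)
    linear_combination key - (A+z)*hm - 2*m*hnn
  have hcmn : IsCoprime m nn := by
    rw [Int.isCoprime_iff_gcd_eq_one]
    by_contra hgne
    obtain ⟨p, hpp, hpd⟩ := Nat.exists_prime_and_dvd hgne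
    have hpm : (p:ℤ) ∣ m := (Int.natCast_dvd_natCast.mpr hpd).trans (Int.gcd_dvd_left _ _)
    have hpn : (p:ℤ) ∣ nn := (Int.natCast_dvd_natCast.mpr hpd).trans (Int.gcd_dvd_right _ _)
    have hpI : Prime (p:ℤ) := Nat.prime_iff_prime_int.mp hpp
    have hpA : (p:ℤ) ∣ A := hsum1 ▸ dvd_add hpm hpn
    have hpz : (p:ℤ) ∣ z := hdiff1 ▸ dvd_sub hpn hpm
    have hp7y : (p:ℤ)^2 ∣ 7*(w+w)^4 := by
      rw [← key]; exact dvd_sub (pow_dvd_pow_of_dvd hpA 2) (pow_dvd_pow_of_dvd hpz 2)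
    have hpy : (p:ℤ) ∣ (w+w) := by
      rcases hpI.dvd_mul.mp ((dvd_pow_self (p:ℤ) two_ne_zero).trans hp7y) with h7 | hy4
      · have hp7 : p = 7 := by
          have : (p:ℤ) ∣ ((7:ℕ):ℤ) := by exact_mod_cast h7
          exact (Nat.prime_dvd_prime_iff_eq hpp (by norm_num)).mp (Int.natCast_dvd_natCast.mp this)
        subst hp7
        obtain ⟨k, hk⟩ := hp7y
        have h7y4 : (7:ℤ) ∣ (w+w)^4 := ⟨k, by push_cast at hk; linarith⟩
        exact hpI.dvd_of_dvd_pow (by exact_mod_cast h7y4)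
      · exact hpI.dvd_of_dvd_pow hy4
    have hpx : (p:ℤ) ∣ x := by
      apply hpI.dvd_of_dvd_pow (n := 2)
      have hx2 : x^2 = A - 2*(w+w)^2 := by rw [hAdef]; ring
      rw [hx2]
      exact dvd_sub hpA ((dvd_pow hpy two_ne_zero).mul_left 2)
    exact hpI.not_unit (hcop.isUnit_of_dvd' hpx hpy)
  obtain ⟨s, t, hs, ht, hstc, htodd, hst, heqx⟩ :
      ∃ s t : ℤ, 0 < s ∧ 0 < t ∧ IsCoprime s t ∧ Odd t ∧ s * t = w ∧
        x ^ 2 = 28 * s ^ 4 + t ^ 4 - 8 * (s ^ 2 * t ^ 2) := by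
    rcases Int.even_or_odd m with hme | hmo
    · have hnodd : Odd nn := by
        rcases Int.even_or_odd nn with hne | hno
        · exact absurd hAodd (Int.not_odd_iff_even.mpr (hsum1 ▸ hme.add hne))
        · exact hno
      exact stage1 hmpos hnnpos hxodd hw hcmn hnodd hprod1
        (by rw [hsum1, hAdef]; ring)
    · exact stage1 hnnpos hmpos hxodd hw hcmn.symm hmo
        (by rw [mul_comm]; exact hprod1) (by rw [add_comm, hsum1, hAdef]; ring)
  -- s must be even
  have hseven : Even s := by
    by_contra hso
    exact K2 (X := x^2) (S := s^4) (T := t^4) (U := s^2*t^2) (by linear_combination heqx)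
      (odd_sq_mod8 hxodd) (odd_pow4_mod8 htodd) (odd_pow4_mod8 (Int.not_even_iff_odd.mp hso))
  obtain ⟨r, rfl⟩ := hseven
  have hr : 0 < r := by omega
  set u : ℤ := t^2 - 16*r^2 with hudef
  have huodd : Odd u := by
    rw [hudef]; exact (htodd.pow).sub_even ⟨8*(r*r), by ring⟩
  have hxu : (x - u) * (x + u) = 192 * r^4 := by
    linear_combination heqx - (u + t^2 - 16*r^2) * hudef
  obtain ⟨p, hp2⟩ := hxodd.sub_odd huodd
  obtain ⟨qq, hq2⟩ := hxodd.add_odd huodd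
  have hprod2 : p * qq = 48 * r^4 := by
    apply mul_left_cancel₀ (a := (4:ℤ)) (by norm_num)
    linear_combination hxu - (x+u)*hp2 - 2*p*hq2
  have hsum2 : p + qq = x := by omega
  have hdiff2 : qq - p = u := by omega
  obtain ⟨hppos, hqqpos⟩ := both_pos hprod2 (by positivity) (by omega)
  have ht2 : t^2 = qq - p + 16*r^2 := by linear_combination -hdiff2 - hudef
  have hcop2 : IsCoprime p qq := by
    rw [Int.isCoprime_iff_gcd_eq_one]
    by_contra hgne
    obtain ⟨l, hlp, hld⟩ := Nat.exists_prime_and_dvd hgne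
    have hLp : (l:ℤ) ∣ p := (Int.natCast_dvd_natCast.mpr hld).trans (Int.gcd_dvd_left _ _)
    have hLq : (l:ℤ) ∣ qq := (Int.natCast_dvd_natCast.mpr hld).trans (Int.gcd_dvd_right _ _)
    have hLI : Prime (l:ℤ) := Nat.prime_iff_prime_int.mp hlp
    have hLx : (l:ℤ) ∣ x := hsum2 ▸ dvd_add hLp hLq
    have hLu : (l:ℤ) ∣ u := hdiff2 ▸ dvd_sub hLq hLp
    have hL2 : l ≠ 2 := by
      rintro rfl
      obtain ⟨c, hc⟩ := hLx
      exact (Int.not_odd_iff_even.mpr ⟨c, by push_cast at hc; omega⟩) hxodd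
    have hLr : (l:ℤ) ∣ r := by
      have h48 : (l:ℤ) ∣ 16 * (3 * r^4) := by
        rw [show (16:ℤ)*(3*r^4) = 48*r^4 by ring, ← hprod2]
        exact hLp.mul_right qq
      rcases hLI.dvd_mul.mp h48 with h16 | h3r
      · exfalso
        have h2 : (l:ℤ) ∣ 2 := hLI.dvd_of_dvd_pow (n := 4) (by norm_num at h16 ⊢; exact h16)
        have : l ∣ 2 := Int.natCast_dvd_natCast.mp (by exact_mod_cast h2)
        exact hL2 ((Nat.prime_dvd_prime_iff_eq hlp Nat.prime_two).mp this)
      rcases hLI.dvd_mul.mp h3r with h3 | hr4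
      · have hl3 : l = 3 := by
          have : (l:ℤ) ∣ ((3:ℕ):ℤ) := by exact_mod_cast h3
          exact (Nat.prime_dvd_prime_iff_eq hlp (by norm_num)).mp (Int.natCast_dvd_natCast.mp this)
        subst hl3
        have h9 : (9:ℤ) ∣ p * qq := by
          have h33 : ((3:ℕ):ℤ) * ((3:ℕ):ℤ) ∣ p * qq := mul_dvd_mul hLp hLq
          norm_num at h33
          exact h33
        obtain ⟨k, hk⟩ := h9
        rw [hprod2] at hk
        have h316 : (3:ℤ) ∣ 16 * r^4 := ⟨k, by linarith⟩
        rcases hLI.dvd_mul.mp (by push_cast; exact h316) with h16' | hr4'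
        · exfalso; norm_num at h16'
        · exact hLI.dvd_of_dvd_pow hr4'
      · exact hLI.dvd_of_dvd_pow hr4
    have hLt : (l:ℤ) ∣ t := by
      apply hLI.dvd_of_dvd_pow (n := 2)
      rw [show t^2 = u + 16*r^2 by linarith [hudef]]
      exact dvd_add hLu ((dvd_pow hLr two_ne_zero).mul_left 16)
    exact hLI.not_unit (hstc.isUnit_of_dvd' (dvd_add hLr hLr) hLt)
  -- stage 2 decomposition
  have hx16 : ∀ (P Q : ℤ), 0 < P → 0 < Q → Odd Q → IsCoprime P Q → P * Q = 48*r^4 →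
      (16:ℤ) ∣ P := by
    intro P Q hP hQ hQodd hPQ hPQ48
    have hc : IsCoprime ((2:ℤ)^4) Q := coprime_pow2_of_odd hQodd 4
    have h16 : ((2:ℤ)^4) ∣ P * Q := by rw [hPQ48]; exact ⟨3*r^4, by ring⟩
    have := hc.dvd_of_dvd_mul_right h16
    norm_num at this
    exact this
  rcases Int.even_or_odd p with hpe | hpo
  · -- p even, qq odd
    have hqo : Odd qq := by
      rcases Int.even_or_odd qq with hne | hno
      · exfalso
        have : Even x := hsum2 ▸ hpe.add hne
        exact (Int.not_odd_iff_even.mpr this) hxodd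
      · exact hno
    obtain ⟨a, b, ha, hb, hab, habc, hcase⟩ :=
      decomp hppos hqqpos hr hcop2 (by norm_num : Prime (3:ℤ)) (by norm_num)
        (by norm_num : (0:ℤ) < 16) (hx16 p qq hppos hqqpos hqo hcop2 hprod2)
        (by norm_num) (by linear_combination hprod2)
    rcases hcase with ⟨hp4, hq4⟩ | ⟨hp4, hq4⟩
    · -- p = 48 a^4, qq = b^4 : the descent case
      have hbodd : Odd b := by
        rcases Int.even_or_odd b with ⟨c, rfl⟩ | h
        · exact absurd (hq4 ▸ hqo) (Int.not_odd_iff_even.mpr ⟨8*c^4, by ring⟩)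
        · exact h
      have heqnew : b^4 + 4*b^2*(2*a)^2 - 3*(2*a)^4 = t^2 := by
        linear_combination -ht2 + hp4 - hq4 + 16*(r + a*b)*hab
      have hyval : w + w = 4*(a*b*t) := by
        linear_combination -2*hst - 4*t*hab
      have hlt2 : 2*a < w + w := by
        rw [hyval]
        exact two_a_lt ha (by omega) (by omega)
      have hN' : (2*a).natAbs < N :=
        hN ▸ Int.natAbs_lt_natAbs_of_nonneg_of_lt (by positivity) hlt2
      exact ih _ hN' b (2*a) t rfl hb (by positivity) ht heqnew
    · -- p = 16 a^4, qq = 3 b^4 : kill mod 8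
      have hbodd : Odd b := by
        have := Int.odd_mul.mp (hq4 ▸ hqo)
        exact odd_of_pow4_odd this.2
      exact K3 (X := t^2) (B := b^4) (A := a^4) (C := a^2*b^2)
        (by linear_combination ht2 + hq4 - hp4 - 16*(r + a*b)*hab)
        (odd_sq_mod8 htodd) (odd_pow4_mod8 hbodd)
  · -- p odd, qq even
    have hqe : Even qq := by
      rcases Int.even_or_odd qq with hne | hno
      · exact hne
      · exfalso
        have : Even x := hsum2 ▸ hpo.add_odd hno
        exact (Int.not_odd_iff_even.mpr this) hxodd
    obtain ⟨a, b, ha, hb, hab, habc, hcase⟩ :=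
      decomp hqqpos hppos hr hcop2.symm (by norm_num : Prime (3:ℤ)) (by norm_num)
        (by norm_num : (0:ℤ) < 16) (hx16 qq p hqqpos hppos hpo hcop2.symm (by rw [mul_comm]; exact hprod2))
        (by norm_num) (by rw [mul_comm] at hprod2; linear_combination hprod2)
    rcases hcase with ⟨hq4, hp4⟩ | ⟨hq4, hp4⟩
    · -- qq = 48 a^4, p = b^4 : kill: t² = 48a⁴ − b⁴ + 16a²b²
      have hbodd : Odd b := by
        rcases Int.even_or_odd b with ⟨c, rfl⟩ | h
        · exact absurd (hp4 ▸ hpo) (Int.not_odd_iff_even.mpr ⟨8*c^4, by ring⟩)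
        · exact h
      exact K4 (X := t^2) (B := b^4) (A := a^4) (C := a^2*b^2)
        (by linear_combination ht2 + hq4 - hp4 - 16*(r + a*b)*hab)
        (odd_sq_mod8 htodd) (odd_pow4_mod8 hbodd)
    · -- qq = 16 a^4, p = 3 b^4 : kill: t² = 16a⁴ − 3b⁴ + 16a²b²
      have hbodd : Odd b := by
        have := Int.odd_mul.mp (hp4 ▸ hpo)
        exact odd_of_pow4_odd this.2
      exact K5 (X := t^2) (B := b^4) (A := a^4) (C := a^2*b^2)
        (by linear_combination ht2 + hq4 - hp4 - 16*(r + a*b)*hab)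
        (odd_sq_mod8 htodd) (odd_pow4_mod8 hbodd)


theorem stmt7 :
    ¬ ∃ x y z : ℤ, 0 < x ∧ 0 < y ∧ 0 < z ∧
      x ^ 4 + 4 * x ^ 2 * y ^ 2 - 3 * y ^ 4 = z ^ 2 := by
  rintro ⟨x, y, z, hx, hy, hz, heq⟩
  exact descent y.natAbs x y z rfl hx hy hz heq
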